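/- Suppose Assumptions A and C-1 hold (with g convex). Let ρ > 0, x^r, x^{r+1} ∈ X, and suppose y^r and y^{r+1} are produced by consecutive linearized proximal y-updates: y^{r+1} = argmax_{y∈Y} ⟨∇_y f(x^{r+1}, y^r), y − y^r⟩ − (1/(2ρ))‖y − y^r‖² − g(y) and y^r = argmax_{y∈Y} ⟨∇_y f(x^r, y^{r−1}), y − y^{r−1}⟩ − (1/(2ρ))‖y − y^{r−1}‖² − g(y). Then, with F^{r+1} := (1/(2ρ))‖y^{r+1} − y^r‖² and F^r := (1/(2ρ))‖y^r − y^{r−1}‖², it holds that F^{r+1} ≤ F^r + (L_y²/(2θ))‖x^{r+1} − x^r‖² + (θ/2)‖y^{r+1} − y^r‖² − (θ − ρL_y²/2)‖y^r − y^{r−1}‖². -/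

import Mathlib

open scoped RealInnerProductSpace

set_option maxHeartbeats 1000000
lemma le_zero_of_forall_small (L C : ℝ) (hC : 0 ≤ C)
    (h : ∀ t : ℝ, 0 < t → t ≤ 1 → L ≤ t * C) : L ≤ 0 := by
  refine le_of_forall_pos_le_add ?_
  intro ε hε
  have hCp : (0:ℝ) < C + 1 := by linarith
  have ht0 : 0 < min 1 (ε / (C + 1)) := lt_min one_pos (div_pos hε hCp)
  have h1 := h _ ht0 (min_le_left _ _)
  have h2 : min 1 (ε / (C + 1)) * C ≤ ε / (C + 1) * C :=
    mul_le_mul_of_nonneg_right (min_le_right _ _) hC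
  have h3 : ε / (C + 1) * C ≤ ε := by
    rw [div_mul_eq_mul_div, div_le_iff₀ hCp]
    nlinarith
  linarith

/-- Variational inequality satisfied by the maximizer of the linearized proximal objective. -/
lemma prox_VI {E : Type*} [NormedAddCommGroup E] [InnerProductSpace ℝ E]
    {Y : Set E} (hY : Convex ℝ Y) {g : E → ℝ} (hg : ConvexOn ℝ Set.univ g)
    (G yb : E) {ρ : ℝ} (hρ : 0 < ρ) {w : E} (hw : w ∈ Y)
    (hmax : ∀ u ∈ Y, ⟪G, u - yb⟫ - 1 / (2 * ρ) * ‖u - yb‖ ^ 2 - g u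
      ≤ ⟪G, w - yb⟫ - 1 / (2 * ρ) * ‖w - yb‖ ^ 2 - g w)
    {u : E} (hu : u ∈ Y) :
    ⟪G, u - w⟫ - 1 / ρ * ⟪w - yb, u - w⟫ + g w - g u ≤ 0 := by
  refine le_zero_of_forall_small _ (1 / (2 * ρ) * ‖u - w‖ ^ 2) (by positivity) ?_
  intro t ht0 ht1
  have hz : (1 - t) • w + t • u ∈ Y := hY hw hu (by linarith) ht0.le (by ring)
  have hzeq : (1 - t) • w + t • u = w + t • (u - w) := by
    rw [smul_sub, sub_smul, one_smul]; abel
  rw [hzeq] at hz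
  have h1 := hmax _ hz
  have hg1 : g (w + t • (u - w)) ≤ (1 - t) * g w + t * g u := by
    rw [← hzeq]
    exact hg.2 (Set.mem_univ w) (Set.mem_univ u) (by linarith) ht0.le (by ring)
  have hinner : ⟪G, w + t • (u - w) - yb⟫ = ⟪G, w - yb⟫ + t * ⟪G, u - w⟫ := by
    have h2 : w + t • (u - w) - yb = (w - yb) + t • (u - w) := by abel
    rw [h2, inner_add_right, real_inner_smul_right]
  have hnorm : ‖w + t • (u - w) - yb‖ ^ 2
      = ‖w - yb‖ ^ 2 + 2 * (t * ⟪w - yb, u - w⟫) + t ^ 2 * ‖u - w‖ ^ 2 := by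
    have h2 : w + t • (u - w) - yb = (w - yb) + t • (u - w) := by abel
    rw [h2, norm_add_sq_real, real_inner_smul_right, norm_smul, mul_pow,
      Real.norm_eq_abs, sq_abs]
  rw [hinner, hnorm] at h1
  have er : 1 / ρ * ⟪w - yb, u - w⟫ = 2 * (1 / (2 * ρ) * ⟪w - yb, u - w⟫) := by
    field_simp
  have ht' : t * (⟪G, u - w⟫ - 1 / ρ * ⟪w - yb, u - w⟫ + g w - g u)
      ≤ t * (t * (1 / (2 * ρ) * ‖u - w‖ ^ 2)) := by
    rw [er]; nlinarith [h1, hg1]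
  exact le_of_mul_le_mul_left ht' ht0


/-- The recursion on successive `y`-differences (eq. (eq:rec) in the paper) used in the
potential-decrease argument for the strongly concave case: with
`F^{r+1} = (1/(2ρ))‖y^{r+1} − y^r‖²` and `F^r = (1/(2ρ))‖y^r − y^{r−1}‖²`,
`F^{r+1} ≤ F^r + (L_y²/(2θ))‖x^{r+1} − x^r‖² + (θ/2)‖y^{r+1} − y^r‖²
 − (θ − ρL_y²/2)‖y^r − y^{r−1}‖²`. -/
theorem hibsa_y_difference_recursion
    {n M : ℕ}
    -- Assumption A
    (X : Set (EuclideanSpace ℝ (Fin n))) (hXconv : Convex ℝ X) (hXcomp : IsCompact X)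
    (Y : Set (EuclideanSpace ℝ (Fin M))) (hYconv : Convex ℝ Y) (hYcomp : IsCompact Y)
    (f : EuclideanSpace ℝ (Fin n) → EuclideanSpace ℝ (Fin M) → ℝ)
    (g : EuclideanSpace ℝ (Fin M) → ℝ) (hgconv : ConvexOn ℝ Set.univ g)
    (Gfy : EuclideanSpace ℝ (Fin n) → EuclideanSpace ℝ (Fin M) → EuclideanSpace ℝ (Fin M))
    (hGfy : ∀ x y, HasGradientAt (fun z => f x z) (Gfy x y) y)
    (Ly : ℝ)
    (hLy : ∀ (x x' : EuclideanSpace ℝ (Fin n)) (y y' : EuclideanSpace ℝ (Fin M)),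
      x ∈ X → x' ∈ X → y ∈ Y → y' ∈ Y →
      ‖Gfy x' y' - Gfy x y‖ ≤ Ly * Real.sqrt (‖x' - x‖ ^ 2 + ‖y' - y‖ ^ 2))
    -- Assumption C-1 (θ-strong concavity in y)
    (θ : ℝ) (hθ : 1 < θ)
    (hC1 : ∀ (x : EuclideanSpace ℝ (Fin n)) (y z : EuclideanSpace ℝ (Fin M)),
      x ∈ X → y ∈ Y → z ∈ Y →
      f x z - f x y ≤ ⟪Gfy x y, z - y⟫ - θ / 2 * ‖z - y‖ ^ 2)
    -- two consecutive linearized proximal y-updates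
    (ρ : ℝ) (hρ : 0 < ρ)
    (x x' : EuclideanSpace ℝ (Fin n)) (hx : x ∈ X) (hx' : x' ∈ X)
    (ym1 y y' : EuclideanSpace ℝ (Fin M)) (hym1 : ym1 ∈ Y)
    (hyup0 : y ∈ Y ∧ ∀ u ∈ Y,
      ⟪Gfy x ym1, u - ym1⟫ - 1 / (2 * ρ) * ‖u - ym1‖ ^ 2 - g u
        ≤ ⟪Gfy x ym1, y - ym1⟫ - 1 / (2 * ρ) * ‖y - ym1‖ ^ 2 - g y)
    (hyup1 : y' ∈ Y ∧ ∀ u ∈ Y,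
      ⟪Gfy x' y, u - y⟫ - 1 / (2 * ρ) * ‖u - y‖ ^ 2 - g u
        ≤ ⟪Gfy x' y, y' - y⟫ - 1 / (2 * ρ) * ‖y' - y‖ ^ 2 - g y') :
    -- conclusion
    1 / (2 * ρ) * ‖y' - y‖ ^ 2
      ≤ 1 / (2 * ρ) * ‖y - ym1‖ ^ 2 + Ly ^ 2 / (2 * θ) * ‖x' - x‖ ^ 2
          + θ / 2 * ‖y' - y‖ ^ 2 - (θ - ρ * Ly ^ 2 / 2) * ‖y - ym1‖ ^ 2 := by
  obtain ⟨hy, hmax0⟩ := hyup0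
  obtain ⟨hy', hmax1⟩ := hyup1
  have hθ0 : (0:ℝ) < θ := by linarith
  -- variational inequalities
  have V1 := prox_VI hYconv hgconv (Gfy x' y) y hρ hy' hmax1 hy
  have V0 := prox_VI hYconv hgconv (Gfy x ym1) ym1 hρ hy hmax0 hy'
  -- rewrite V1 in terms of a := y' - y
  have e1 : ⟪Gfy x' y, y - y'⟫ = -⟪Gfy x' y, y' - y⟫ := by
    rw [← neg_sub y' y, inner_neg_right]
  have e2 : ⟪y' - y, y - y'⟫ = -‖y' - y‖ ^ 2 := by
    rw [← neg_sub y' y, inner_neg_right, real_inner_self_eq_norm_sq]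
  rw [e1, e2] at V1
  -- V1 : -⟪G', a⟫ - 1/ρ * (-‖a‖^2) + g y' - g y ≤ 0
  -- V0 : ⟪G0, a⟫ - 1/ρ * ⟪b, a⟫ + g y - g y' ≤ 0
  -- multiply by ρ and sum
  have c1 : ρ * (1 / ρ * ‖y' - y‖ ^ 2) = ‖y' - y‖ ^ 2 := by field_simp
  have c2 : ρ * (1 / ρ * ⟪y - ym1, y' - y⟫) = ⟪y - ym1, y' - y⟫ := by field_simp
  have V1r := mul_le_mul_of_nonneg_left V1 hρ.le
  have V0r := mul_le_mul_of_nonneg_left V0 hρ.le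
  have hsum : ‖y' - y‖ ^ 2
      ≤ ρ * (⟪Gfy x' y, y' - y⟫ - ⟪Gfy x ym1, y' - y⟫) + ⟪y - ym1, y' - y⟫ := by
    linarith [V1r, V0r, c1, c2]
  -- split the gradient difference
  have esplit1 : ⟪Gfy x' y - Gfy x y, y' - y⟫ = ⟪Gfy x' y, y' - y⟫ - ⟪Gfy x y, y' - y⟫ :=
    inner_sub_left _ _ _
  have esplit2 : ⟪Gfy x y - Gfy x ym1, y' - y⟫ = ⟪Gfy x y, y' - y⟫ - ⟪Gfy x ym1, y' - y⟫ :=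
    inner_sub_left _ _ _
  -- Lipschitz bounds
  have hv : ‖Gfy x' y - Gfy x y‖ ≤ Ly * ‖x' - x‖ := by
    have h := hLy x x' y y hx hx' hy hy
    simpa [Real.sqrt_sq (norm_nonneg (x' - x))] using h
  have hc : ‖Gfy x y - Gfy x ym1‖ ≤ Ly * ‖y - ym1‖ := by
    have h := hLy x x ym1 y hx hx hym1 hy
    simpa [Real.sqrt_sq (norm_nonneg (y - ym1))] using h
  -- strong monotonicity
  have hcb : ⟪Gfy x y - Gfy x ym1, y - ym1⟫ ≤ -θ * ‖y - ym1‖ ^ 2 := by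
    have h1 := hC1 x ym1 y hx hym1 hy
    have h2 := hC1 x y ym1 hx hy hym1
    have e3 : ⟪Gfy x y, ym1 - y⟫ = -⟪Gfy x y, y - ym1⟫ := by
      rw [← neg_sub y ym1, inner_neg_right]
    have e4 : ‖ym1 - y‖ = ‖y - ym1‖ := norm_sub_rev _ _
    rw [e3, e4] at h2
    have e5 : ⟪Gfy x y - Gfy x ym1, y - ym1⟫
        = ⟪Gfy x y, y - ym1⟫ - ⟪Gfy x ym1, y - ym1⟫ := inner_sub_left _ _ _
    linarith
  -- w := ρ • c + b
  set c : EuclideanSpace ℝ (Fin M) := Gfy x y - Gfy x ym1 with hcdef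
  have hwa : ⟪ρ • c + (y - ym1), y' - y⟫ = ρ * ⟪c, y' - y⟫ + ⟪y - ym1, y' - y⟫ := by
    rw [inner_add_left, real_inner_smul_left]
  have hwn : ‖ρ • c + (y - ym1)‖ ^ 2
      = ρ ^ 2 * ‖c‖ ^ 2 + 2 * (ρ * ⟪c, y - ym1⟫) + ‖y - ym1‖ ^ 2 := by
    rw [norm_add_sq_real, real_inner_smul_left, norm_smul, mul_pow,
      Real.norm_eq_abs, sq_abs]
  -- scalar ingredients
  have I2 : 2 * θ * ⟪Gfy x' y - Gfy x y, y' - y⟫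
      ≤ Ly ^ 2 * ‖x' - x‖ ^ 2 + θ ^ 2 * ‖y' - y‖ ^ 2 := by
    have hva : ⟪Gfy x' y - Gfy x y, y' - y⟫ ≤ Ly * ‖x' - x‖ * ‖y' - y‖ := by
      calc ⟪Gfy x' y - Gfy x y, y' - y⟫ ≤ ‖Gfy x' y - Gfy x y‖ * ‖y' - y‖ :=
            real_inner_le_norm _ _
        _ ≤ Ly * ‖x' - x‖ * ‖y' - y‖ := mul_le_mul_of_nonneg_right hv (norm_nonneg _)
    nlinarith [sq_nonneg (Ly * ‖x' - x‖ - θ * ‖y' - y‖), hθ0]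
  have I3 : 2 * ⟪ρ • c + (y - ym1), y' - y⟫
      ≤ ‖y' - y‖ ^ 2 + ‖ρ • c + (y - ym1)‖ ^ 2 := by
    have := real_inner_le_norm (ρ • c + (y - ym1)) (y' - y)
    nlinarith [sq_nonneg (‖ρ • c + (y - ym1)‖ - ‖y' - y‖)]
  have I4 : ‖ρ • c + (y - ym1)‖ ^ 2
      ≤ ρ ^ 2 * Ly ^ 2 * ‖y - ym1‖ ^ 2 - 2 * ρ * θ * ‖y - ym1‖ ^ 2 + ‖y - ym1‖ ^ 2 := by
    have hc2 : ‖c‖ ^ 2 ≤ Ly ^ 2 * ‖y - ym1‖ ^ 2 := by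
      nlinarith [hc, norm_nonneg c]
    nlinarith [hwn, hcb, hρ, sq_nonneg ρ, mul_le_mul_of_nonneg_left hcb hρ.le,
      mul_le_mul_of_nonneg_left hc2 (sq_nonneg ρ)]
  -- combine
  have hA := mul_le_mul_of_nonneg_left hsum hθ0.le
  have hB := mul_le_mul_of_nonneg_left I2 hρ.le
  have hC := mul_le_mul_of_nonneg_left I3 hθ0.le
  have hD := mul_le_mul_of_nonneg_left I4 hθ0.le
  have hmain : θ * ‖y' - y‖ ^ 2
      ≤ θ * ‖y - ym1‖ ^ 2 + ρ * Ly ^ 2 * ‖x' - x‖ ^ 2 + ρ * θ ^ 2 * ‖y' - y‖ ^ 2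
        - 2 * ρ * θ ^ 2 * ‖y - ym1‖ ^ 2 + ρ ^ 2 * θ * Ly ^ 2 * ‖y - ym1‖ ^ 2 := by
    have es1 : θ * (ρ * ⟪Gfy x' y - Gfy x y, y' - y⟫)
        = θ * (ρ * (⟪Gfy x' y, y' - y⟫ - ⟪Gfy x y, y' - y⟫)) := by rw [esplit1]
    have es2 : θ * (ρ * ⟪c, y' - y⟫)
        = θ * (ρ * (⟪Gfy x y, y' - y⟫ - ⟪Gfy x ym1, y' - y⟫)) := by rw [esplit2]
    have es3 : θ * ⟪ρ • c + (y - ym1), y' - y⟫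
        = θ * (ρ * ⟪c, y' - y⟫ + ⟪y - ym1, y' - y⟫) := by rw [hwa]
    linarith [hA, hB, hC, hD, es1, es2, es3]
  -- conclude
  rw [← mul_le_mul_iff_right₀ (show (0:ℝ) < 2 * ρ * θ by positivity)]
  have f1 : 2 * ρ * θ * (1 / (2 * ρ) * ‖y' - y‖ ^ 2) = θ * ‖y' - y‖ ^ 2 := by
    field_simp
  have f2 : 2 * ρ * θ * (1 / (2 * ρ) * ‖y - ym1‖ ^ 2) = θ * ‖y - ym1‖ ^ 2 := by
    field_simp
  have f3 : 2 * ρ * θ * (Ly ^ 2 / (2 * θ) * ‖x' - x‖ ^ 2) = ρ * Ly ^ 2 * ‖x' - x‖ ^ 2 := by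
    field_simp
  linarith [hmain, f1, f2, f3]
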